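/- Let A be a finite-dimensional unital associative algebra over a field K. If A possesses a K-linear comultiplication δ : A → A ⊗ A which is coassociative, admits a counit ε : A → K, and is a map of A-bimodules (δ(a x b) = a · δ(x) · b for all a, x, b ∈ A, where A ⊗ A carries the outer bimodule structure a·(u ⊗ v)·b = (a u) ⊗ (v b)), then A is a Frobenius algebra, i.e. there exists an isomorphism λ_L : A → A* of left A-modules. -/
import Mathlib


open TensorProduct

/-- If a finite-dimensional algebra `A` possesses a coassociative
counital comultiplication `δ : A → A ⊗ A` which is a map of `A`-bimodules (for the
outer bimodule structure on `A ⊗ A`), then `A` is a Frobenius algebra: there is an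
isomorphism `λ_L : A ≃ A*` of left `A`-modules, where `(a · ζ)(b) = ζ(b a)`. -/
theorem comultiplication_implies_frobenius
    {K : Type*} [Field K] {A : Type*} [Ring A] [Algebra K A] [FiniteDimensional K A]
    (δ : A →ₗ[K] A ⊗[K] A) (ε : A →ₗ[K] K)
    (hcoassoc : ∀ a : A,
      (TensorProduct.assoc K A A A)
          ((TensorProduct.map δ (LinearMap.id : A →ₗ[K] A)) (δ a)) =
        (TensorProduct.map (LinearMap.id : A →ₗ[K] A) δ) (δ a))
    (hcounit_l : ∀ a : A,
      (TensorProduct.lid K A)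
          ((TensorProduct.map ε (LinearMap.id : A →ₗ[K] A)) (δ a)) = a)
    (hcounit_r : ∀ a : A,
      (TensorProduct.rid K A)
          ((TensorProduct.map (LinearMap.id : A →ₗ[K] A) ε) (δ a)) = a)
    (hbimod : ∀ a x b : A,
      δ (a * x * b) =
        (TensorProduct.map (LinearMap.mulLeft K a) (LinearMap.mulRight K b)) (δ x)) :
    ∃ lL : A ≃ₗ[K] Module.Dual K A,
      ∀ a x b : A, lL (a * x) b = lL x (b * a) := by
  -- the Frobenius form: x ↦ (b ↦ ε (b * x))
  let f : A →ₗ[K] Module.Dual K A :=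
    { toFun := fun x => ε ∘ₗ LinearMap.mulRight K x
      map_add' := by
        intro x y; ext b
        simp [LinearMap.mulRight_apply, mul_add]
      map_smul' := by
        intro c x; ext b
        simp [LinearMap.mulRight_apply, mul_smul_comm] }
  have hf : ∀ x b : A, f x b = ε (b * x) := fun x b => rfl
  -- injectivity
  have hinj : Function.Injective f := by
    rw [injective_iff_map_eq_zero]
    intro x hx
    have hz : ε ∘ₗ LinearMap.mulRight K x = 0 := hx
    have h1 : δ x = TensorProduct.map LinearMap.id (LinearMap.mulRight K x) (δ 1) := by
      have := hbimod 1 1 x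
      simpa [LinearMap.mulLeft_one] using this
    have h2 : (TensorProduct.map (LinearMap.id : A →ₗ[K] A) ε) (δ x) = 0 := by
      rw [h1, ← LinearMap.comp_apply, ← TensorProduct.map_comp, hz,
        TensorProduct.map_zero_right, LinearMap.zero_apply]
    have := hcounit_r x
    rw [h2] at this
    simpa using this.symm
  have hdim : Module.finrank K A = Module.finrank K (Module.Dual K A) :=
    (Subspace.dual_finrank_eq (K := K) (V := A)).symm
  refine ⟨LinearMap.linearEquivOfInjective f hinj hdim, ?_⟩
  intro a x b
  show f (a * x) b = f x (b * a)
  rw [hf, hf, mul_assoc]
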